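/- Assume that T := sup_{δ ∈ [0,1]} T_c^δ < +∞ (the case δ = 0 being the unperturbed system), and for each δ ∈ [0,1] set θ̄_i := x̄_{i+1} − x̄_i (i = 1,2) on [0,T_c^δ], extended so that min{θ̄₁, θ̄₂}(T_c^δ) = 0. Then there exists C > 0, depending only on s, γ, ‖σ‖_∞, the initial gaps x₂⁰ − x₁⁰ and x₃⁰ − x₂⁰, and T, but not on δ, such that for every δ ∈ [0,1] and all t, t' ∈ [0,T_c^δ]: |min{θ̄₁, θ̄₂}(t) − min{θ̄₁, θ̄₂}(t')| ≤ C |t − t'|^{1/(2s+1)}. -/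

import Mathlib

open Real Filter Set MeasureTheory

noncomputable section

/-- The fractional Laplacian of order `2s` (principal-value form). -/
def fracLap (s : ℝ) (φ : ℝ → ℝ) (x : ℝ) : ℝ :=
  (1/2) * ∫ y : ℝ, (φ (x + y) + φ (x - y) - 2 * φ x) / |y| ^ (1 + 2*s)

/-- Assumptions on the periodic potential `W`. -/
structure IsPotential (W : ℝ → ℝ) : Prop where
  contDiff : ContDiff ℝ 3 W
  holder3 : ∃ C r : NNReal, 0 < (r : ℝ) ∧ (r : ℝ) < 1 ∧ HolderWith C r (iteratedDeriv 3 W)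
  periodic : ∀ v : ℝ, W (v + 1) = W v
  zero_int : ∀ n : ℤ, W (n : ℝ) = 0
  pos_nonint : ∀ v : ℝ, (∀ n : ℤ, v ≠ (n : ℝ)) → 0 < W v
  second_deriv_pos : 0 < deriv (deriv W) 0

/-- The basic layer solution `u`. -/
structure IsLayer (s : ℝ) (W u : ℝ → ℝ) : Prop where
  diff : Differentiable ℝ u
  eqn : ∀ x, fracLap s u x = deriv W (u x)
  deriv_pos : ∀ x, 0 < deriv u x
  lim_bot : Tendsto u atBot (nhds 0)
  lim_top : Tendsto u atTop (nhds 1)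
  half : u 0 = 1/2

/-- Assumptions on the external stress `σ`. -/
structure SigmaOK (s : ℝ) (σ : ℝ → ℝ → ℝ) : Prop where
  bounded : ∃ B : ℝ, ∀ t x : ℝ, 0 ≤ t → |σ t x| ≤ B
  ucont : UniformContinuousOn (fun p : ℝ × ℝ => σ p.1 p.2) (Ici 0 ×ˢ univ)
  deriv_bound : ∃ M : ℝ, 0 < M ∧ ∃ α : ℝ, s < α ∧ α < 1 ∧
    (∀ t x : ℝ, 0 ≤ t →
      |deriv (fun ξ => σ t ξ) x| + |deriv (fun τ => σ τ x) t| ≤ M) ∧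
    (∀ t x h : ℝ, 0 ≤ t →
      |deriv (fun ξ => σ t ξ) (x + h) - deriv (fun ξ => σ t ξ) x| ≤ M * |h| ^ α)

/-- `v` is a bounded pointwise solution of `ε ∂_t v = I_s v − ε^{−2s} W'(v) + σ`
with initial datum `v0`. -/
def SolvesPDE (s ε : ℝ) (W : ℝ → ℝ) (σ : ℝ → ℝ → ℝ) (v0 : ℝ → ℝ) (v : ℝ → ℝ → ℝ) : Prop :=
  (∃ B : ℝ, ∀ t x : ℝ, |v t x| ≤ B) ∧
  (∀ x : ℝ, v 0 x = v0 x) ∧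
  (∀ t : ℝ, 0 < t → ∀ x : ℝ,
    HasDerivAt (fun τ => v τ x)
      ((1/ε) * (fracLap s (v t) x - (1/ε ^ (2*s)) * deriv W (v t x) + σ t x)) t)

/-- The `δ`-perturbed two-particle system with collision time `Tc`
(the case `δ = 0` is the unperturbed one). -/
def TwoPartPert (s γ δ : ℝ) (σ : ℝ → ℝ → ℝ) (x10 x20 Tc : ℝ) (x1 x2 : ℝ → ℝ) : Prop :=
  x1 0 = x10 - δ ∧ x2 0 = x20 + δ ∧
  ContinuousOn x1 (Ico 0 Tc) ∧ ContinuousOn x2 (Ico 0 Tc) ∧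
  (∀ t ∈ Ioo (0:ℝ) Tc,
    HasDerivAt x1 (γ * (1/(2*s*(x2 t - x1 t) ^ (2*s)) - σ t (x1 t) - δ)) t ∧
    HasDerivAt x2 (γ * (-(1/(2*s*(x2 t - x1 t) ^ (2*s))) + σ t (x2 t) + δ)) t) ∧
  (∀ t ∈ Ico (0:ℝ) Tc, x1 t < x2 t) ∧
  Tendsto (fun t => x2 t - x1 t) (nhdsWithin Tc (Iio Tc)) (nhds 0)

/-- Orientations of the three transition layers. -/
def zeta : Fin 3 → ℝ := ![1, -1, 1]

/-- The `δ`-perturbed three-particle system with collision time `Tc`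
(the case `δ = 0` is the unperturbed one). -/
def ThreePartPert (s γ δ : ℝ) (σ : ℝ → ℝ → ℝ) (X0 : Fin 3 → ℝ) (Tc : ℝ)
    (X : Fin 3 → ℝ → ℝ) : Prop :=
  (∀ i, X i 0 = X0 i - zeta i * δ) ∧
  (∀ i, ContinuousOn (X i) (Ico 0 Tc)) ∧
  (∀ i, ∀ t ∈ Ioo (0:ℝ) Tc,
    HasDerivAt (X i)
      (γ * ((∑ j ∈ Finset.univ.erase i,
          zeta i * zeta j * (X i t - X j t) / (2*s*|X i t - X j t| ^ (1+2*s)))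
        - zeta i * σ t (X i t) - zeta i * δ)) t) ∧
  (∀ t ∈ Ico (0:ℝ) Tc, X 0 t < X 1 t ∧ X 1 t < X 2 t) ∧
  Tendsto (fun t => min (X 1 t - X 0 t) (X 2 t - X 1 t)) (nhdsWithin Tc (Iio Tc)) (nhds 0)

/-- The corrector equation, together with the decay at infinity. -/
def CorrectorEqn (s η : ℝ) (W u ψ : ℝ → ℝ) : Prop :=
  (∀ x, fracLap s ψ x - deriv (deriv W) (u x) * ψ x
      = deriv u x + η * (deriv (deriv W) (u x) - deriv (deriv W) 0)) ∧
  Tendsto ψ atBot (nhds 0) ∧ Tendsto ψ atTop (nhds 0)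

/-- The layer problem (without regularity). -/
def LayerEqn (s : ℝ) (W u : ℝ → ℝ) : Prop :=
  (∀ x, fracLap s u x = deriv W (u x)) ∧ (∀ x, 0 < deriv u x) ∧
  Tendsto u atBot (nhds 0) ∧ Tendsto u atTop (nhds 1) ∧ u 0 = 1/2

/-- Membership in `C^{2,α}(ℝ)` for some `α ∈ (0,1)`. -/
def C2Holder (u : ℝ → ℝ) : Prop :=
  ContDiff ℝ 2 u ∧ ∃ C r : NNReal, 0 < (r : ℝ) ∧ (r : ℝ) < 1 ∧ HolderWith C r (iteratedDeriv 2 u)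

def heaviside (x : ℝ) : ℝ := if 0 < x then 1 else 0

/-- The barrier `v̄_ε` for the two-particle system, where the velocities `c̄ᵢ = ẋ̄ᵢ`
are expressed through the right-hand side of the ODE system. -/
def vbar2 (s γ ε δ β : ℝ) (u ψ : ℝ → ℝ) (σ : ℝ → ℝ → ℝ) (x1 x2 : ℝ → ℝ) (t x : ℝ) : ℝ :=
  ε ^ (2*s) * (σ t x + δ) / β + u ((x - x1 t)/ε) + u ((x2 t - x)/ε) - 1
    - ε ^ (2*s) * (γ * (1/(2*s*(x2 t - x1 t) ^ (2*s)) - σ t (x1 t) - δ)) * ψ ((x - x1 t)/ε)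
    + ε ^ (2*s) * (γ * (-(1/(2*s*(x2 t - x1 t) ^ (2*s))) + σ t (x2 t) + δ)) * ψ ((x2 t - x)/ε)

/-- The barrier `v̄_ε` for the three-particle system, where the velocities `c̄ᵢ = ẋ̄ᵢ`
are expressed through the right-hand side of the ODE system. -/
def vbar3 (s γ ε δ β : ℝ) (u ψ : ℝ → ℝ) (σ : ℝ → ℝ → ℝ) (X : Fin 3 → ℝ → ℝ) (t x : ℝ) : ℝ :=
  ε ^ (2*s) * (σ t x + δ) / β + (∑ i, u (zeta i * (x - X i t)/ε)) - 1
    - ∑ i, zeta i * ε ^ (2*s)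
        * (γ * ((∑ j ∈ Finset.univ.erase i,
            zeta i * zeta j * (X i t - X j t) / (2*s*|X i t - X j t| ^ (1+2*s)))
          - zeta i * σ t (X i t) - zeta i * δ))
        * ψ (zeta i * (x - X i t)/ε)

/-- The hat system for two particles, solved on `[0,T]` with prescribed initial data. -/
def HatSys2 (s γ δ : ℝ) (σ : ℝ → ℝ → ℝ) (a b T : ℝ) (x1 x2 : ℝ → ℝ) : Prop :=
  x1 0 = a ∧ x2 0 = b ∧
  ContinuousOn x1 (Icc 0 T) ∧ ContinuousOn x2 (Icc 0 T) ∧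
  (∀ t ∈ Ioo (0:ℝ) T,
    HasDerivAt x1 (γ * (1/(2*s*(x2 t - x1 t) ^ (2*s)) - σ t (x1 t) - δ)) t ∧
    HasDerivAt x2 (γ * (-(1/(2*s*(x2 t - x1 t) ^ (2*s))) + σ t (x2 t) + δ)) t) ∧
  (∀ t ∈ Icc (0:ℝ) T, x1 t < x2 t)

/-- The hat system for three particles, solved on `[0,T]` with prescribed initial data. -/
def HatSys3 (s γ δ : ℝ) (σ : ℝ → ℝ → ℝ) (a : Fin 3 → ℝ) (T : ℝ) (X : Fin 3 → ℝ → ℝ) : Prop :=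
  (∀ i, X i 0 = a i) ∧
  (∀ i, ContinuousOn (X i) (Icc 0 T)) ∧
  (∀ i, ∀ t ∈ Ioo (0:ℝ) T,
    HasDerivAt (X i)
      (γ * ((∑ j ∈ Finset.univ.erase i,
          zeta i * zeta j * (X i t - X j t) / (2*s*|X i t - X j t| ^ (1+2*s)))
        - zeta i * σ t (X i t) - zeta i * δ)) t) ∧
  (∀ t ∈ Icc (0:ℝ) T, X 0 t < X 1 t ∧ X 1 t < X 2 t)

/-- The supersolution barrier used after collision in the three-particle case. -/
def hsup (s ε μ K ρ y : ℝ) (u : ℝ → ℝ) (t x : ℝ) : ℝ :=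
  u ((x - (y + K * ρ * (Real.exp (-μ * t / ε ^ (2*s+1)) - 1)))/ε)
    + ρ * Real.exp (-μ * t / ε ^ (2*s+1))

end

open Topology NNReal

noncomputable def qv (s d : ℝ) : ℝ := 1 / (2*s*d^(2*s))

lemma qv_nonneg {s d : ℝ} (hs : 0 < s) (hd : 0 < d) : 0 ≤ qv s d := by
  have h := Real.rpow_pos_of_pos hd (2*s); unfold qv; positivity

lemma qv_anti {s : ℝ} (hs : 0 < s) {d e : ℝ} (hd : 0 < d) (hde : d ≤ e) : qv s e ≤ qv s d := by
  have h1 : 0 < d^(2*s) := Real.rpow_pos_of_pos hd _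
  have h2 : d^(2*s) ≤ e^(2*s) := Real.rpow_le_rpow hd.le hde (by positivity)
  unfold qv
  apply one_div_le_one_div_of_le (by positivity)
  nlinarith

lemma two_qv {s d : ℝ} (hs : 0 < s) (hd : 0 < d) : 2 * qv s d = 1/(s*d^(2*s)) := by
  have h1 : d^(2*s) ≠ 0 := ne_of_gt (Real.rpow_pos_of_pos hd _)
  unfold qv; field_simp

lemma aux_rpow_sub_le {x y p : ℝ} (hy : 0 ≤ y) (hxy : y ≤ x) (hp : 1 ≤ p) :
    (x - y) ^ p ≤ x ^ p - y ^ p := by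
  have hx : 0 ≤ x := hy.trans hxy
  have h := NNReal.add_rpow_le_rpow_add (x - y).toNNReal y.toNNReal hp
  have h3 := (NNReal.coe_le_coe).2 h
  push_cast [NNReal.coe_rpow, Real.coe_toNNReal _ (sub_nonneg.2 hxy), Real.coe_toNNReal _ hy] at h3
  rw [sub_add_cancel] at h3
  linarith

lemma aux_freq_slope {f : ℝ → ℝ} {x d : ℝ} (h : HasDerivAt f d x) :
    Tendsto (slope f x) (𝓝[>] x) (𝓝 d) := by
  have h1 : Tendsto (slope f x) (𝓝[≠] x) (𝓝 d) := hasDerivAt_iff_tendsto_slope.1 h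
  exact h1.mono_left (nhdsWithin_mono x fun z hz => (mem_compl_singleton_iff).2 (ne_of_gt hz))

lemma aux_lip_of_slope (f : ℝ → ℝ) (Tc L : ℝ)
    (hf : ContinuousOn f (Ico 0 Tc)) (hL : 0 ≤ L)
    (hs : ∀ x ∈ Ioo (0:ℝ) Tc, ∀ r, L < r → ∃ᶠ z in 𝓝[>] x, slope f x z < r) :
    ∀ u v : ℝ, 0 ≤ u → u ≤ v → v < Tc → f v - f u ≤ L * (v - u) := by
  have key : ∀ u v : ℝ, 0 < u → u ≤ v → v < Tc → f v - f u ≤ L * (v - u) := by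
    intro u v hu huv hv
    have hsub : Icc u v ⊆ Ico 0 Tc := fun z hz => ⟨hu.le.trans hz.1, lt_of_le_of_lt hz.2 hv⟩
    have hB' : ∀ x ∈ Ico u v, HasDerivWithinAt (fun t => f u + L * (t - u)) L (Ici x) x := by
      intro x _
      simpa using (((hasDerivWithinAt_id x (Ici x)).sub_const u).const_mul L).const_add (f u)
    have := image_le_of_liminf_slope_right_le_deriv_boundary
      (hf.mono hsub) (by simp)
      (continuousOn_const.add (continuousOn_const.mul (continuousOn_id.sub continuousOn_const)))
      hB'
      (fun x hx r hr => hs x ⟨lt_of_lt_of_le hu hx.1, lt_trans hx.2 hv⟩ r hr)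
      (right_mem_Icc.2 huv)
    simp only [Pi.add_apply, Pi.mul_apply, Pi.sub_apply, id_eq] at this
    linarith
  intro u v hu huv hv
  rcases eq_or_lt_of_le hu with h0 | h0
  · rcases eq_or_lt_of_le huv with h1 | h1
    · simp [← h1]
    · subst h0
      have hFne : (𝓝[Ioo (0:ℝ) v] 0).NeBot := by
        rw [← mem_closure_iff_nhdsWithin_neBot, closure_Ioo (ne_of_lt h1)]
        exact ⟨le_rfl, h1.le⟩
      have hfc : Tendsto f (𝓝[Ioo (0:ℝ) v] 0) (𝓝 (f 0)) :=
        (hf 0 ⟨le_rfl, lt_trans h1 hv⟩).mono_left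
          (nhdsWithin_mono 0 fun z hz => ⟨hz.1.le, hz.2.trans hv⟩)
      have ht1 : Tendsto (fun a => f v - f a) (𝓝[Ioo (0:ℝ) v] 0) (𝓝 (f v - f 0)) :=
        tendsto_const_nhds.sub hfc
      have ht2 : Tendsto (fun a : ℝ => L * (v - a)) (𝓝[Ioo (0:ℝ) v] 0) (𝓝 (L * (v - 0))) :=
        ((continuous_const.mul (continuous_const.sub continuous_id)).tendsto 0).mono_left
          nhdsWithin_le_nhds
      have hev : ∀ᶠ a in 𝓝[Ioo (0:ℝ) v] 0, f v - f a ≤ L * (v - a) := by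
        filter_upwards [self_mem_nhdsWithin] with a ha
        exact key a v ha.1 ha.2.le hv
      have := le_of_tendsto_of_tendsto ht1 ht2 hev
      simpa using this
  · exact key u v h0 huv hv

set_option maxHeartbeats 1600000

theorem statement_14
    (s γ : ℝ) (hs : s ∈ Ioo (0:ℝ) 1) (hγ : 0 < γ)
    (σ : ℝ → ℝ → ℝ) (hσ : SigmaOK s σ)
    (x10 x20 x30 : ℝ) (hx : x10 < x20 ∧ x20 < x30)
    (Xb : ℝ → Fin 3 → ℝ → ℝ) (Tcδ : ℝ → ℝ)
    (hpert : ∀ δ ∈ Icc (0:ℝ) 1,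
      0 < Tcδ δ ∧ ThreePartPert s γ δ σ ![x10, x20, x30] (Tcδ δ) (Xb δ))
    (T : ℝ) (hT : ∀ δ ∈ Icc (0:ℝ) 1, Tcδ δ ≤ T)
    (θm : ℝ → ℝ → ℝ)
    (hθm : ∀ δ t : ℝ, θm δ t =
      if t < Tcδ δ then min (Xb δ 1 t - Xb δ 0 t) (Xb δ 2 t - Xb δ 1 t) else 0) :
    ∃ C > (0:ℝ), ∀ δ ∈ Icc (0:ℝ) 1, ∀ t ∈ Icc (0:ℝ) (Tcδ δ), ∀ t' ∈ Icc (0:ℝ) (Tcδ δ),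
      |θm δ t - θm δ t'| ≤ C * |t - t'| ^ (1/(2*s+1)) := by

  obtain ⟨hs0, hs1⟩ := hs
  obtain ⟨B, hBσ⟩ := hσ.bounded
  have hB0 : 0 ≤ B := (abs_nonneg _).trans (hBσ 0 0 le_rfl)
  have hT0 : 0 < T := lt_of_lt_of_le (hpert 0 ⟨le_rfl, zero_le_one⟩).1 (hT 0 ⟨le_rfl, zero_le_one⟩)
  have hx13 : x10 < x30 := hx.1.trans hx.2
  obtain ⟨p, hpdef⟩ : ∃ p : ℝ, p = 2*s+1 := ⟨_, rfl⟩
  have hp1 : 1 < p := by rw [hpdef]; linarith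
  have hp0 : 0 < p := by linarith
  obtain ⟨A, hAdef⟩ : ∃ A : ℝ, A = 2*B+2 := ⟨_, rfl⟩
  have hA0 : 0 < A := by rw [hAdef]; linarith
  obtain ⟨M, hMdef⟩ : ∃ M : ℝ, M = (x30 - x10) + 2*γ*(B+1)*T := ⟨_, rfl⟩
  have hM0 : 0 < M := by
    have h2 : 0 ≤ 2*γ*(B+1)*T := by positivity
    rw [hMdef]; linarith
  obtain ⟨L0, hL0def⟩ : ∃ L0 : ℝ, L0 = p*γ*(1/s + A*M^(2*s)) := ⟨_, rfl⟩
  have hL00 : 0 ≤ L0 := by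
    have h1 : 0 ≤ M^(2*s) := Real.rpow_nonneg hM0.le _
    have h2 : 0 < 1/s := by positivity
    have h3 : 0 ≤ A*M^(2*s) := mul_nonneg hA0.le h1
    rw [hL0def]
    have h4 : 0 ≤ p*γ := (mul_pos hp0 hγ).le
    nlinarith
  obtain ⟨L, hLdef⟩ : ∃ L : ℝ, L = L0 + 1 := ⟨_, rfl⟩
  have hLpos : 0 < L := by rw [hLdef]; linarith
  refine ⟨L ^ (1/p), Real.rpow_pos_of_pos hLpos _, ?_⟩
  intro δ hδ t ht t' ht'
  rw [show (1:ℝ)/(2*s+1) = 1/p from by rw [hpdef]]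
  obtain ⟨hTc0, hinit, hcontX, hdX, hord, hcoll⟩ := hpert δ hδ
  have hθ1pos : ∀ z ∈ Ico (0:ℝ) (Tcδ δ), 0 < Xb δ 1 z - Xb δ 0 z :=
    fun z hz => sub_pos.2 (hord z hz).1
  have hθ2pos : ∀ z ∈ Ico (0:ℝ) (Tcδ δ), 0 < Xb δ 2 z - Xb δ 1 z :=
    fun z hz => sub_pos.2 (hord z hz).2
  have hD : ∀ x ∈ Ioo (0:ℝ) (Tcδ δ),
      HasDerivAt (fun z => Xb δ 1 z - Xb δ 0 z)
        (γ*(-(2*qv s (Xb δ 1 x - Xb δ 0 x)) + qv s (Xb δ 2 x - Xb δ 1 x)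
          + qv s (Xb δ 2 x - Xb δ 0 x) + σ x (Xb δ 1 x) + σ x (Xb δ 0 x) + 2*δ)) x
    ∧ HasDerivAt (fun z => Xb δ 2 z - Xb δ 1 z)
        (γ*(qv s (Xb δ 2 x - Xb δ 0 x) + qv s (Xb δ 1 x - Xb δ 0 x)
          - 2*qv s (Xb δ 2 x - Xb δ 1 x) - σ x (Xb δ 2 x) - σ x (Xb δ 1 x) - 2*δ)) x
    ∧ HasDerivAt (fun z => Xb δ 2 z - Xb δ 0 z)
        (γ*(2*qv s (Xb δ 2 x - Xb δ 0 x) - qv s (Xb δ 1 x - Xb δ 0 x)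
          - qv s (Xb δ 2 x - Xb δ 1 x) - σ x (Xb δ 2 x) + σ x (Xb δ 0 x))) x := by
    intro x hx
    have hx' : x ∈ Ico (0:ℝ) (Tcδ δ) := ⟨hx.1.le, hx.2⟩
    have ha := hθ1pos x hx'
    have hb := hθ2pos x hx'
    have hc : 0 < Xb δ 2 x - Xb δ 0 x := by linarith
    have h0 := hdX 0 x hx
    have h1 := hdX 1 x hx
    have h2 := hdX 2 x hx
    have hane : (Xb δ 1 x - Xb δ 0 x) ^ (2*s) ≠ 0 := ne_of_gt (Real.rpow_pos_of_pos ha _)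
    have hbne : (Xb δ 2 x - Xb δ 1 x) ^ (2*s) ≠ 0 := ne_of_gt (Real.rpow_pos_of_pos hb _)
    have hcne : (Xb δ 2 x - Xb δ 0 x) ^ (2*s) ≠ 0 := ne_of_gt (Real.rpow_pos_of_pos hc _)
    have hsne : s ≠ 0 := ne_of_gt hs0
    refine ⟨?_, ?_, ?_⟩
    · refine HasDerivAt.congr_deriv (h1.sub h0) ?_
      rw [show Finset.univ.erase (1:Fin 3) = {0,2} from by decide,
          show Finset.univ.erase (0:Fin 3) = {1,2} from by decide,
          Finset.sum_pair (by decide : (0:Fin 3) ≠ 2),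
          Finset.sum_pair (by decide : (1:Fin 3) ≠ 2)]
      rw [abs_sub_comm (Xb δ 0 x) (Xb δ 1 x), abs_sub_comm (Xb δ 0 x) (Xb δ 2 x),
          abs_sub_comm (Xb δ 1 x) (Xb δ 2 x)]
      simp only [abs_of_pos ha, abs_of_pos hb, abs_of_pos hc,
        show zeta 0 = 1 from rfl, show zeta 1 = -1 from rfl, show zeta 2 = 1 from rfl]
      rw [Real.rpow_add ha 1 (2*s), Real.rpow_add hb 1 (2*s), Real.rpow_add hc 1 (2*s)]
      simp only [Real.rpow_one, qv]
      field_simp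
      ring
    · refine HasDerivAt.congr_deriv (h2.sub h1) ?_
      rw [show Finset.univ.erase (2:Fin 3) = {0,1} from by decide,
          show Finset.univ.erase (1:Fin 3) = {0,2} from by decide,
          Finset.sum_pair (by decide : (0:Fin 3) ≠ 1),
          Finset.sum_pair (by decide : (0:Fin 3) ≠ 2)]
      rw [abs_sub_comm (Xb δ 1 x) (Xb δ 2 x)]
      simp only [abs_of_pos ha, abs_of_pos hb, abs_of_pos hc,
        show zeta 0 = 1 from rfl, show zeta 1 = -1 from rfl, show zeta 2 = 1 from rfl]
      rw [Real.rpow_add ha 1 (2*s), Real.rpow_add hb 1 (2*s), Real.rpow_add hc 1 (2*s)]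
      simp only [Real.rpow_one, qv]
      field_simp
      ring
    · refine HasDerivAt.congr_deriv (h2.sub h0) ?_
      rw [show Finset.univ.erase (2:Fin 3) = {0,1} from by decide,
          show Finset.univ.erase (0:Fin 3) = {1,2} from by decide,
          Finset.sum_pair (by decide : (0:Fin 3) ≠ 1),
          Finset.sum_pair (by decide : (1:Fin 3) ≠ 2)]
      rw [abs_sub_comm (Xb δ 0 x) (Xb δ 1 x), abs_sub_comm (Xb δ 0 x) (Xb δ 2 x)]
      simp only [abs_of_pos ha, abs_of_pos hb, abs_of_pos hc,
        show zeta 0 = 1 from rfl, show zeta 1 = -1 from rfl, show zeta 2 = 1 from rfl]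
      rw [Real.rpow_add ha 1 (2*s), Real.rpow_add hb 1 (2*s), Real.rpow_add hc 1 (2*s)]
      simp only [Real.rpow_one, qv]
      field_simp
      ring
  have hσb : ∀ x : ℝ, 0 ≤ x → ∀ i : Fin 3, -B ≤ σ x (Xb δ i x) ∧ σ x (Xb δ i x) ≤ B :=
    fun x hx i => abs_le.1 (hBσ x (Xb δ i x) hx)
  have hδ0 : 0 ≤ δ := hδ.1
  have hδ1 : δ ≤ 1 := hδ.2
  have hMb : ∀ z ∈ Ico (0:ℝ) (Tcδ δ), Xb δ 2 z - Xb δ 0 z ≤ M := by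
    have hslope : ∀ x ∈ Ioo (0:ℝ) (Tcδ δ), ∀ r, 2*γ*(B+1) < r →
        ∃ᶠ z in 𝓝[>] x, slope (fun t => Xb δ 2 t - Xb δ 0 t) x z < r := by
      intro x hx r hr
      have hx' : x ∈ Ico (0:ℝ) (Tcδ δ) := ⟨hx.1.le, hx.2⟩
      have ha := hθ1pos x hx'
      have hb := hθ2pos x hx'
      obtain ⟨-, -, hd3⟩ := hD x hx
      have hq1 : qv s (Xb δ 2 x - Xb δ 0 x) ≤ qv s (Xb δ 1 x - Xb δ 0 x) :=
        qv_anti hs0 ha (by linarith)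
      have hq2 : qv s (Xb δ 2 x - Xb δ 0 x) ≤ qv s (Xb δ 2 x - Xb δ 1 x) :=
        qv_anti hs0 hb (by linarith)
      have hσ2 := hσb x hx.1.le 2
      have hσ0 := hσb x hx.1.le 0
      have hval : γ*(2*qv s (Xb δ 2 x - Xb δ 0 x) - qv s (Xb δ 1 x - Xb δ 0 x)
          - qv s (Xb δ 2 x - Xb δ 1 x) - σ x (Xb δ 2 x) + σ x (Xb δ 0 x)) ≤ 2*γ*(B+1) := by
        have hpar : 2*qv s (Xb δ 2 x - Xb δ 0 x) - qv s (Xb δ 1 x - Xb δ 0 x)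
            - qv s (Xb δ 2 x - Xb δ 1 x) - σ x (Xb δ 2 x) + σ x (Xb δ 0 x) ≤ 2*(B+1) := by
          linarith [hσ2.1, hσ2.2, hσ0.1, hσ0.2]
        calc γ*(2*qv s (Xb δ 2 x - Xb δ 0 x) - qv s (Xb δ 1 x - Xb δ 0 x)
            - qv s (Xb δ 2 x - Xb δ 1 x) - σ x (Xb δ 2 x) + σ x (Xb δ 0 x))
            ≤ γ*(2*(B+1)) := mul_le_mul_of_nonneg_left hpar hγ.le
          _ = 2*γ*(B+1) := by ring
      exact ((aux_freq_slope hd3).eventually_lt_const (lt_of_le_of_lt hval hr)).frequently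
    intro z hz
    have h1 := aux_lip_of_slope (fun t => Xb δ 2 t - Xb δ 0 t) (Tcδ δ) (2*γ*(B+1))
      ((hcontX 2).sub (hcontX 0)) (by positivity) hslope 0 z le_rfl hz.1 hz.2
    have h1' : Xb δ 2 z - Xb δ 0 z - (Xb δ 2 0 - Xb δ 0 0) ≤ 2*γ*(B+1)*(z-0) := h1
    have h00 : Xb δ 2 0 - Xb δ 0 0 = x30 - x10 := by
      rw [hinit 2, hinit 0]
      norm_num [zeta, Matrix.cons_val_two]
    have hzT : z ≤ T := le_trans hz.2.le (hT δ hδ)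
    have h2 : 2*γ*(B+1)*z ≤ 2*γ*(B+1)*T :=
      mul_le_mul_of_nonneg_left hzT (by positivity)
    rw [hMdef]; linarith
  -- the function g = (min gap)^p
  obtain ⟨g, hgeq⟩ : ∃ g : ℝ → ℝ, ∀ z, g z = θm δ z ^ p := ⟨_, fun _ => rfl⟩
  have hgif : ∀ z, z < Tcδ δ → g z = (min (Xb δ 1 z - Xb δ 0 z) (Xb δ 2 z - Xb δ 1 z)) ^ p := by
    intro z hz; rw [hgeq, hθm, if_pos hz]
  have hminpos : ∀ z ∈ Ico (0:ℝ) (Tcδ δ), 0 < min (Xb δ 1 z - Xb δ 0 z) (Xb δ 2 z - Xb δ 1 z) :=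
    fun z hz => lt_min (hθ1pos z hz) (hθ2pos z hz)
  have hgc : ContinuousOn g (Ico 0 (Tcδ δ)) := by
    have hmc : ContinuousOn (fun z => min (Xb δ 1 z - Xb δ 0 z) (Xb δ 2 z - Xb δ 1 z))
        (Ico 0 (Tcδ δ)) :=
      ContinuousOn.inf ((hcontX 1).sub (hcontX 0)) ((hcontX 2).sub (hcontX 1))
    exact (hmc.rpow_const fun z hz => Or.inr hp0.le).congr fun z hz => hgif z hz.2
  -- uniform auxiliary bounds
  have hIDw : ∀ w : ℝ, 0 < w → w ≤ M^(2*s) → p*γ*(1/s + A*w) ≤ L0 := by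
    intro w hw hwM
    rw [hL0def]
    have h := mul_le_mul_of_nonneg_left hwM (mul_nonneg (mul_pos hp0 hγ).le hA0.le)
    nlinarith [h]
  have hprod : ∀ w : ℝ, 0 < w → γ*(1/(s*w) + A)*p*w = p*γ*(1/s + A*w) := by
    intro w hw
    have hw' : w ≠ 0 := ne_of_gt hw
    field_simp
  have hexp : p - 1 = 2*s := by rw [hpdef]; ring
  -- derivative bounds for the two gap powers
  have hder1 : ∀ x ∈ Ioo (0:ℝ) (Tcδ δ), ∃ d : ℝ,
      HasDerivAt (fun z => (Xb δ 1 z - Xb δ 0 z) ^ p) d x ∧ -L0 ≤ d ∧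
      (Xb δ 1 x - Xb δ 0 x ≤ Xb δ 2 x - Xb δ 1 x → d ≤ L0) := by
    intro x hx
    have hx' : x ∈ Ico (0:ℝ) (Tcδ δ) := ⟨hx.1.le, hx.2⟩
    have ha := hθ1pos x hx'
    have hb := hθ2pos x hx'
    have hc : 0 < Xb δ 2 x - Xb δ 0 x := by linarith
    obtain ⟨hd1, -, -⟩ := hD x hx
    have hDer := HasDerivAt.rpow_const (p := p) hd1 (Or.inl (ne_of_gt ha))
    rw [hexp] at hDer
    have hwpos : 0 < (Xb δ 1 x - Xb δ 0 x) ^ (2*s) := Real.rpow_pos_of_pos ha _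
    have hwM : (Xb δ 1 x - Xb δ 0 x) ^ (2*s) ≤ M^(2*s) :=
      Real.rpow_le_rpow ha.le (by have := hMb x hx'; linarith) (by positivity)
    have h2q := two_qv hs0 ha
    have hqb := qv_nonneg hs0 hb
    have hqc := qv_nonneg hs0 hc
    have hσ1 := hσb x hx.1.le 1
    have hσ0 := hσb x hx.1.le 0
    have hswpos : 0 < 1/(s*(Xb δ 1 x - Xb δ 0 x) ^ (2*s)) := by positivity
    refine ⟨_, hDer, ?_, ?_⟩
    · -- lower bound
      have hD1lo : -(γ*(1/(s*(Xb δ 1 x - Xb δ 0 x) ^ (2*s)) + A)) ≤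
          γ*(-(2*qv s (Xb δ 1 x - Xb δ 0 x)) + qv s (Xb δ 2 x - Xb δ 1 x)
            + qv s (Xb δ 2 x - Xb δ 0 x) + σ x (Xb δ 1 x) + σ x (Xb δ 0 x) + 2*δ) := by
        have hpar : -(1/(s*(Xb δ 1 x - Xb δ 0 x) ^ (2*s)) + A) ≤
            -(2*qv s (Xb δ 1 x - Xb δ 0 x)) + qv s (Xb δ 2 x - Xb δ 1 x)
            + qv s (Xb δ 2 x - Xb δ 0 x) + σ x (Xb δ 1 x) + σ x (Xb δ 0 x) + 2*δ := by
          linarith [hσ1.1, hσ0.1, hAdef]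
        have := mul_le_mul_of_nonneg_left hpar hγ.le
        linarith [this]
      have h3 := mul_le_mul_of_nonneg_right
        (mul_le_mul_of_nonneg_right hD1lo hp0.le) hwpos.le
      have heq : (-(γ*(1/(s*(Xb δ 1 x - Xb δ 0 x) ^ (2*s)) + A)))*p*((Xb δ 1 x - Xb δ 0 x) ^ (2*s))
          = -(γ*(1/(s*(Xb δ 1 x - Xb δ 0 x) ^ (2*s)) + A)*p*((Xb δ 1 x - Xb δ 0 x) ^ (2*s))) := by
        ring
      rw [heq, hprod _ hwpos] at h3
      have h4 := hIDw _ hwpos hwM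
      linarith
    · intro hmin
      have hqb' : qv s (Xb δ 2 x - Xb δ 1 x) ≤ qv s (Xb δ 1 x - Xb δ 0 x) := qv_anti hs0 ha hmin
      have hqc' : qv s (Xb δ 2 x - Xb δ 0 x) ≤ qv s (Xb δ 1 x - Xb δ 0 x) :=
        qv_anti hs0 ha (by linarith)
      have hD1hi : γ*(-(2*qv s (Xb δ 1 x - Xb δ 0 x)) + qv s (Xb δ 2 x - Xb δ 1 x)
            + qv s (Xb δ 2 x - Xb δ 0 x) + σ x (Xb δ 1 x) + σ x (Xb δ 0 x) + 2*δ)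
          ≤ γ*(1/(s*(Xb δ 1 x - Xb δ 0 x) ^ (2*s)) + A) := by
        have hpar : -(2*qv s (Xb δ 1 x - Xb δ 0 x)) + qv s (Xb δ 2 x - Xb δ 1 x)
            + qv s (Xb δ 2 x - Xb δ 0 x) + σ x (Xb δ 1 x) + σ x (Xb δ 0 x) + 2*δ
            ≤ 1/(s*(Xb δ 1 x - Xb δ 0 x) ^ (2*s)) + A := by
          linarith [hσ1.2, hσ0.2, hAdef]
        exact mul_le_mul_of_nonneg_left hpar hγ.le
      have h3 := mul_le_mul_of_nonneg_right
        (mul_le_mul_of_nonneg_right hD1hi hp0.le) hwpos.le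
      rw [hprod _ hwpos] at h3
      have h4 := hIDw _ hwpos hwM
      linarith
  have hder2 : ∀ x ∈ Ioo (0:ℝ) (Tcδ δ), ∃ d : ℝ,
      HasDerivAt (fun z => (Xb δ 2 z - Xb δ 1 z) ^ p) d x ∧ -L0 ≤ d ∧
      (Xb δ 2 x - Xb δ 1 x ≤ Xb δ 1 x - Xb δ 0 x → d ≤ L0) := by
    intro x hx
    have hx' : x ∈ Ico (0:ℝ) (Tcδ δ) := ⟨hx.1.le, hx.2⟩
    have ha := hθ1pos x hx'
    have hb := hθ2pos x hx'
    have hc : 0 < Xb δ 2 x - Xb δ 0 x := by linarith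
    obtain ⟨-, hd2, -⟩ := hD x hx
    have hDer := HasDerivAt.rpow_const (p := p) hd2 (Or.inl (ne_of_gt hb))
    rw [hexp] at hDer
    have hwpos : 0 < (Xb δ 2 x - Xb δ 1 x) ^ (2*s) := Real.rpow_pos_of_pos hb _
    have hwM : (Xb δ 2 x - Xb δ 1 x) ^ (2*s) ≤ M^(2*s) :=
      Real.rpow_le_rpow hb.le (by have := hMb x hx'; linarith) (by positivity)
    have h2q := two_qv hs0 hb
    have hqa := qv_nonneg hs0 ha
    have hqc := qv_nonneg hs0 hc
    have hσ1 := hσb x hx.1.le 1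
    have hσ2 := hσb x hx.1.le 2
    have hswpos : 0 < 1/(s*(Xb δ 2 x - Xb δ 1 x) ^ (2*s)) := by positivity
    refine ⟨_, hDer, ?_, ?_⟩
    · have hD2lo : -(γ*(1/(s*(Xb δ 2 x - Xb δ 1 x) ^ (2*s)) + A)) ≤
          γ*(qv s (Xb δ 2 x - Xb δ 0 x) + qv s (Xb δ 1 x - Xb δ 0 x)
            - 2*qv s (Xb δ 2 x - Xb δ 1 x) - σ x (Xb δ 2 x) - σ x (Xb δ 1 x) - 2*δ) := by
        have hpar : -(1/(s*(Xb δ 2 x - Xb δ 1 x) ^ (2*s)) + A) ≤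
            qv s (Xb δ 2 x - Xb δ 0 x) + qv s (Xb δ 1 x - Xb δ 0 x)
            - 2*qv s (Xb δ 2 x - Xb δ 1 x) - σ x (Xb δ 2 x) - σ x (Xb δ 1 x) - 2*δ := by
          linarith [hσ1.2, hσ2.2, hAdef]
        have := mul_le_mul_of_nonneg_left hpar hγ.le
        linarith [this]
      have h3 := mul_le_mul_of_nonneg_right
        (mul_le_mul_of_nonneg_right hD2lo hp0.le) hwpos.le
      have heq : (-(γ*(1/(s*(Xb δ 2 x - Xb δ 1 x) ^ (2*s)) + A)))*p*((Xb δ 2 x - Xb δ 1 x) ^ (2*s))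
          = -(γ*(1/(s*(Xb δ 2 x - Xb δ 1 x) ^ (2*s)) + A)*p*((Xb δ 2 x - Xb δ 1 x) ^ (2*s))) := by
        ring
      rw [heq, hprod _ hwpos] at h3
      have h4 := hIDw _ hwpos hwM
      linarith
    · intro hmin
      have hqa' : qv s (Xb δ 1 x - Xb δ 0 x) ≤ qv s (Xb δ 2 x - Xb δ 1 x) := qv_anti hs0 hb hmin
      have hqc' : qv s (Xb δ 2 x - Xb δ 0 x) ≤ qv s (Xb δ 2 x - Xb δ 1 x) :=
        qv_anti hs0 hb (by linarith)
      have hD2hi : γ*(qv s (Xb δ 2 x - Xb δ 0 x) + qv s (Xb δ 1 x - Xb δ 0 x)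
            - 2*qv s (Xb δ 2 x - Xb δ 1 x) - σ x (Xb δ 2 x) - σ x (Xb δ 1 x) - 2*δ)
          ≤ γ*(1/(s*(Xb δ 2 x - Xb δ 1 x) ^ (2*s)) + A) := by
        have hpar : qv s (Xb δ 2 x - Xb δ 0 x) + qv s (Xb δ 1 x - Xb δ 0 x)
            - 2*qv s (Xb δ 2 x - Xb δ 1 x) - σ x (Xb δ 2 x) - σ x (Xb δ 1 x) - 2*δ
            ≤ 1/(s*(Xb δ 2 x - Xb δ 1 x) ^ (2*s)) + A := by
          linarith [hσ1.1, hσ2.1, hAdef]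
        exact mul_le_mul_of_nonneg_left hpar hγ.le
      have h3 := mul_le_mul_of_nonneg_right
        (mul_le_mul_of_nonneg_right hD2hi hp0.le) hwpos.le
      rw [hprod _ hwpos] at h3
      have h4 := hIDw _ hwpos hwM
      linarith
  have hL0L : L0 < L := by rw [hLdef]; linarith
  -- upward slope bound for g
  have hup : ∀ x ∈ Ioo (0:ℝ) (Tcδ δ), ∀ r, L < r → ∃ᶠ z in 𝓝[>] x, slope g x z < r := by
    intro x hx r hr
    have hx' : x ∈ Ico (0:ℝ) (Tcδ δ) := ⟨hx.1.le, hx.2⟩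
    have hev2 : ∀ᶠ z in 𝓝[>] x, z ∈ Ioo x (Tcδ δ) := Ioo_mem_nhdsGT_of_mem ⟨le_rfl, hx.2⟩
    rcases le_total (Xb δ 1 x - Xb δ 0 x) (Xb δ 2 x - Xb δ 1 x) with hmin | hmin
    · obtain ⟨d, hDer, -, hdle⟩ := hder1 x hx
      have hd_lt : d < r := by have := hdle hmin; linarith
      have hev1 := (aux_freq_slope hDer).eventually_lt_const hd_lt
      refine ((hev1.and hev2).frequently).mono ?_
      rintro z ⟨hs1, hs2⟩
      refine lt_of_le_of_lt ?_ hs1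
      have hzx : 0 < z - x := sub_pos.2 hs2.1
      have hz' : z ∈ Ico (0:ℝ) (Tcδ δ) := ⟨le_trans hx.1.le hs2.1.le, hs2.2⟩
      have hgz : g z ≤ (Xb δ 1 z - Xb δ 0 z) ^ p := by
        rw [hgif z hs2.2]
        exact Real.rpow_le_rpow (hminpos z hz').le (min_le_left _ _) hp0.le
      have hgx : g x = (Xb δ 1 x - Xb δ 0 x) ^ p := by
        rw [hgif x hx.2, min_eq_left hmin]
      rw [slope_def_field, slope_def_field, hgx]
      exact (div_le_div_iff_of_pos_right hzx).2 (by linarith)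
    · obtain ⟨d, hDer, -, hdle⟩ := hder2 x hx
      have hd_lt : d < r := by have := hdle hmin; linarith
      have hev1 := (aux_freq_slope hDer).eventually_lt_const hd_lt
      refine ((hev1.and hev2).frequently).mono ?_
      rintro z ⟨hs1, hs2⟩
      refine lt_of_le_of_lt ?_ hs1
      have hzx : 0 < z - x := sub_pos.2 hs2.1
      have hz' : z ∈ Ico (0:ℝ) (Tcδ δ) := ⟨le_trans hx.1.le hs2.1.le, hs2.2⟩
      have hgz : g z ≤ (Xb δ 2 z - Xb δ 1 z) ^ p := by
        rw [hgif z hs2.2]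
        exact Real.rpow_le_rpow (hminpos z hz').le (min_le_right _ _) hp0.le
      have hgx : g x = (Xb δ 2 x - Xb δ 1 x) ^ p := by
        rw [hgif x hx.2, min_eq_right hmin]
      rw [slope_def_field, slope_def_field, hgx]
      exact (div_le_div_iff_of_pos_right hzx).2 (by linarith)
  -- downward slope bound for g
  have hdown : ∀ x ∈ Ioo (0:ℝ) (Tcδ δ), ∀ r, L < r →
      ∃ᶠ z in 𝓝[>] x, slope (fun z => -g z) x z < r := by
    intro x hx r hr
    have hx' : x ∈ Ico (0:ℝ) (Tcδ δ) := ⟨hx.1.le, hx.2⟩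
    have hev2 : ∀ᶠ z in 𝓝[>] x, z ∈ Ioo x (Tcδ δ) := Ioo_mem_nhdsGT_of_mem ⟨le_rfl, hx.2⟩
    have hcases : (∃ᶠ z in 𝓝[>] x, z ∈ Ioo x (Tcδ δ) ∧
          Xb δ 1 z - Xb δ 0 z ≤ Xb δ 2 z - Xb δ 1 z) ∨
        (∃ᶠ z in 𝓝[>] x, z ∈ Ioo x (Tcδ δ) ∧
          Xb δ 2 z - Xb δ 1 z ≤ Xb δ 1 z - Xb δ 0 z) := by
      rw [← Filter.frequently_or_distrib]
      refine hev2.frequently.mono fun z hz => ?_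
      rcases le_total (Xb δ 1 z - Xb δ 0 z) (Xb δ 2 z - Xb δ 1 z) with h | h
      · exact Or.inl ⟨hz, h⟩
      · exact Or.inr ⟨hz, h⟩
    rcases hcases with hf | hf
    · obtain ⟨d, hDer, hdlo, -⟩ := hder1 x hx
      have hd_gt : -r < d := by linarith
      have hev1 := (aux_freq_slope hDer).eventually_const_lt hd_gt
      refine (hf.and_eventually hev1).mono ?_
      rintro z ⟨⟨hz2, hzmin⟩, hz1⟩
      have hzx : 0 < z - x := sub_pos.2 hz2.1
      have hz' : z ∈ Ico (0:ℝ) (Tcδ δ) := ⟨le_trans hx.1.le hz2.1.le, hz2.2⟩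
      have hgz : g z = (Xb δ 1 z - Xb δ 0 z) ^ p := by
        rw [hgif z hz2.2, min_eq_left hzmin]
      have hgx : g x ≤ (Xb δ 1 x - Xb δ 0 x) ^ p := by
        rw [hgif x hx.2]
        exact Real.rpow_le_rpow (hminpos x hx').le (min_le_left _ _) hp0.le
      rw [slope_def_field] at hz1 ⊢
      have hmono : ((Xb δ 1 z - Xb δ 0 z) ^ p - (Xb δ 1 x - Xb δ 0 x) ^ p)/(z-x)
          ≤ (g z - g x)/(z-x) := (div_le_div_iff_of_pos_right hzx).2 (by rw [hgz]; linarith)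
      have h3 : (-g z - -g x)/(z - x) = -((g z - g x)/(z-x)) := by ring
      rw [h3]
      linarith
    · obtain ⟨d, hDer, hdlo, -⟩ := hder2 x hx
      have hd_gt : -r < d := by linarith
      have hev1 := (aux_freq_slope hDer).eventually_const_lt hd_gt
      refine (hf.and_eventually hev1).mono ?_
      rintro z ⟨⟨hz2, hzmin⟩, hz1⟩
      have hzx : 0 < z - x := sub_pos.2 hz2.1
      have hz' : z ∈ Ico (0:ℝ) (Tcδ δ) := ⟨le_trans hx.1.le hz2.1.le, hz2.2⟩
      have hgz : g z = (Xb δ 2 z - Xb δ 1 z) ^ p := by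
        rw [hgif z hz2.2, min_eq_right hzmin]
      have hgx : g x ≤ (Xb δ 2 x - Xb δ 1 x) ^ p := by
        rw [hgif x hx.2]
        exact Real.rpow_le_rpow (hminpos x hx').le (min_le_right _ _) hp0.le
      rw [slope_def_field] at hz1 ⊢
      have hmono : ((Xb δ 2 z - Xb δ 1 z) ^ p - (Xb δ 2 x - Xb δ 1 x) ^ p)/(z-x)
          ≤ (g z - g x)/(z-x) := (div_le_div_iff_of_pos_right hzx).2 (by rw [hgz]; linarith)
      have h3 : (-g z - -g x)/(z - x) = -((g z - g x)/(z-x)) := by ring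
      rw [h3]
      linarith
  -- Lipschitz bound for g up to (but not incl.) the collision time
  have hA2 : ∀ u v : ℝ, 0 ≤ u → u ≤ v → v < Tcδ δ → |g v - g u| ≤ L * (v - u) := by
    intro u v h1 h2 h3
    have hupp := aux_lip_of_slope g (Tcδ δ) L hgc hLpos.le hup u v h1 h2 h3
    have hdownn := aux_lip_of_slope (fun z => -g z) (Tcδ δ) L hgc.neg hLpos.le hdown u v h1 h2 h3
    have hdownn' : -g v - -g u ≤ L * (v - u) := hdownn
    rw [abs_le]
    constructor <;> linarith
  -- extension to the collision time
  have hA3 : ∀ u v : ℝ, 0 ≤ u → u ≤ v → v ≤ Tcδ δ → |g v - g u| ≤ L * (v - u) := by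
    intro u v hu huv hv
    rcases lt_or_eq_of_le hv with hv' | hveq
    · exact hA2 u v hu huv hv'
    · subst hveq
      rcases lt_or_eq_of_le huv with huv' | hueq
      · have hgTc : g (Tcδ δ) = 0 := by
          rw [hgeq, hθm, if_neg (lt_irrefl _), Real.zero_rpow (ne_of_gt hp0)]
        have hFne : (𝓝[Ioo u (Tcδ δ)] (Tcδ δ)).NeBot := by
          rw [← mem_closure_iff_nhdsWithin_neBot, closure_Ioo (ne_of_lt huv')]
          exact ⟨huv'.le, le_rfl⟩
        have hgv : Tendsto g (𝓝[Ioo u (Tcδ δ)] (Tcδ δ)) (𝓝 0) := by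
          have h1 : Tendsto (fun z => min (Xb δ 1 z - Xb δ 0 z) (Xb δ 2 z - Xb δ 1 z))
              (𝓝[Ioo u (Tcδ δ)] (Tcδ δ)) (𝓝 0) :=
            hcoll.mono_left (nhdsWithin_mono _ fun z hz => hz.2)
          have h2 : Tendsto (fun y : ℝ => y ^ p) (𝓝 0) (𝓝 ((0:ℝ) ^ p)) :=
            (Real.continuousAt_rpow_const 0 p (Or.inr hp0.le)).tendsto
          rw [Real.zero_rpow (ne_of_gt hp0)] at h2
          refine (h2.comp h1).congr' ?_
          filter_upwards [self_mem_nhdsWithin] with z hz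
          exact (hgif z hz.2).symm
        have hev : ∀ᶠ z in 𝓝[Ioo u (Tcδ δ)] (Tcδ δ), g u ≤ g z + L * (z - u) := by
          filter_upwards [self_mem_nhdsWithin] with z hz
          have := hA2 u z hu hz.1.le hz.2
          rw [abs_le] at this
          linarith [this.1]
        have ht2 : Tendsto (fun z => g z + L * (z - u)) (𝓝[Ioo u (Tcδ δ)] (Tcδ δ))
            (𝓝 (0 + L * (Tcδ δ - u))) :=
          hgv.add (((continuous_const.mul (continuous_id.sub continuous_const)).tendsto
            (Tcδ δ)).mono_left nhdsWithin_le_nhds)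
        have hle := le_of_tendsto_of_tendsto tendsto_const_nhds ht2 hev
        have hgu0 : 0 ≤ g u := by
          rw [hgif u huv']
          exact Real.rpow_nonneg (hminpos u ⟨hu, huv'⟩).le _
        rw [hgTc, zero_sub, abs_neg, abs_of_nonneg hgu0]
        linarith
      · subst hueq
        simp
  -- nonnegativity of θm
  have hθnn : ∀ z ∈ Icc (0:ℝ) (Tcδ δ), 0 ≤ θm δ z := by
    intro z hz
    rw [hθm]
    split_ifs with h
    · exact (hminpos z ⟨hz.1, h⟩).le
    · exact le_rfl
  -- final conversion
  have hkey : ∀ u v : ℝ, u ∈ Icc 0 (Tcδ δ) → v ∈ Icc 0 (Tcδ δ) → u ≤ v →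
      |θm δ v - θm δ u| ≤ L ^ (1/p) * |v - u| ^ (1/p) := by
    intro u v hu hv huv
    have hg := hA3 u v hu.1 huv hv.2
    have hnu := hθnn u hu
    have hnv := hθnn v hv
    have habs : |θm δ v - θm δ u| ^ p ≤ L * (v - u) := by
      refine le_trans ?_ hg
      rcases le_total (θm δ u) (θm δ v) with h | h
      · rw [abs_of_nonneg (sub_nonneg.2 h)]
        calc (θm δ v - θm δ u) ^ p ≤ θm δ v ^ p - θm δ u ^ p := aux_rpow_sub_le hnu h hp1.le
          _ = g v - g u := by rw [hgeq, hgeq]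
          _ ≤ |g v - g u| := le_abs_self _
      · rw [abs_of_nonpos (sub_nonpos.2 h), neg_sub]
        calc (θm δ u - θm δ v) ^ p ≤ θm δ u ^ p - θm δ v ^ p := aux_rpow_sub_le hnv h hp1.le
          _ = -(g v - g u) := by rw [hgeq, hgeq]; ring
          _ ≤ |g v - g u| := neg_le_abs _
    have h5 := Real.rpow_le_rpow (by positivity) habs (one_div_nonneg.2 hp0.le)
    rw [← Real.rpow_mul (abs_nonneg _), mul_one_div, div_self (ne_of_gt hp0),
      Real.rpow_one] at h5
    rw [Real.mul_rpow hLpos.le (by linarith : (0:ℝ) ≤ v - u)] at h5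
    rw [abs_of_nonneg (by linarith : (0:ℝ) ≤ v - u)]
    exact h5
  rcases le_total t t' with hor | hor
  · rw [abs_sub_comm (θm δ t) (θm δ t'), abs_sub_comm t t']
    exact hkey t t' ht ht' hor
  · exact hkey t' t ht' ht hor
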